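/- arXiv:1503.03229 — 3 statements merged into one kernel-verified Lean document; each statement's English description precedes it below -/
import Mathlib

section
/- For a nonnegative integer t ≥ 1 and a nonempty simplicial complex Δ: Δ is CM_t if and only if Δ is pure and link_Δ({v}) is CM_{t−1} for every vertex v of Δ. -/
open Finset

/-- An abstract simplicial complex on vertex type `V`: a downward closed
family of finite subsets of `V`. -/
structure AbstractComplex (V : Type*) where
  faces : Set (Finset V)
  down_closed : ∀ {s t : Finset V}, s ∈ faces → t ⊆ s → t ∈ faces

namespace AbstractComplex

variable {V : Type*}

/-- A facet is a maximal face. -/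
def IsFacet (Δ : AbstractComplex V) (s : Finset V) : Prop :=
  s ∈ Δ.faces ∧ ∀ t ∈ Δ.faces, s ⊆ t → s = t

/-- A complex is pure if all facets have the same cardinality. -/
def IsPure (Δ : AbstractComplex V) : Prop :=
  ∀ s t : Finset V, Δ.IsFacet s → Δ.IsFacet t → s.card = t.card

/-- The link of a (potential) face `F`. -/
def link [DecidableEq V] (Δ : AbstractComplex V) (F : Finset V) : AbstractComplex V where
  faces := {G | G ∩ F = ∅ ∧ G ∪ F ∈ Δ.faces}
  down_closed := by
    rintro s t ⟨h1, h2⟩ hts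
    refine ⟨subset_empty.mp ?_, Δ.down_closed h2 (union_subset_union hts subset_rfl)⟩
    exact h1 ▸ inter_subset_inter hts subset_rfl

/-- The faces of cardinality `q` (i.e. dimension `q - 1`). -/
abbrev Face (Δ : AbstractComplex V) (q : ℕ) := {s : Finset V // s ∈ Δ.faces ∧ s.card = q}

/-- The simplicial boundary map on reduced chains with coefficients in `K`,
from chains spanned by faces of cardinality `q+1` to those spanned by faces of
cardinality `q`. -/
noncomputable def boundary (K : Type*) [Field K] [LinearOrder V]
    (Δ : AbstractComplex V) (q : ℕ) :
    (Δ.Face (q + 1) →₀ K) →ₗ[K] (Δ.Face q →₀ K) :=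
  Finsupp.lsum K fun s => LinearMap.toSpanSingleton K _
    (∑ x ∈ s.1.attach,
      ((-1 : K) ^ (s.1.filter (fun y => y < x.1)).card) •
        Finsupp.single (⟨s.1.erase x.1,
          Δ.down_closed s.2.1 (erase_subset _ _), by
            rw [card_erase_of_mem x.2, s.2.2]; omega⟩ : Δ.Face q) (1 : K))

/-- `Δ.RHTriv K i` says that the `i`-th reduced simplicial homology of `Δ`
with coefficients in `K` vanishes. -/
def RHTriv (K : Type*) [Field K] [LinearOrder V] (Δ : AbstractComplex V) : ℤ → Prop
  | Int.ofNat i =>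
      LinearMap.ker (Δ.boundary K i) ≤ LinearMap.range (Δ.boundary K (i + 1))
  | Int.negSucc 0 => ⊤ ≤ LinearMap.range (Δ.boundary K 0)
  | Int.negSucc (_ + 1) => True

/-- `Δ.dimLT i` means `i < dim Δ`. -/
def dimLT (Δ : AbstractComplex V) (i : ℤ) : Prop :=
  ∃ s ∈ Δ.faces, i + 2 ≤ (s.card : ℤ)

/-- Cohen–Macaulayness over `K`, via Reisner's criterion. -/
def IsCM (K : Type*) [Field K] [LinearOrder V] (Δ : AbstractComplex V) : Prop :=
  ∀ F ∈ Δ.faces, ∀ i : ℤ, (Δ.link F).dimLT i → (Δ.link F).RHTriv K i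

/-- `CM_t`: pure, and the link of every face of cardinality at least `t`
is Cohen–Macaulay. -/
def IsCMt (K : Type*) [Field K] [LinearOrder V] (t : ℕ) (Δ : AbstractComplex V) : Prop :=
  Δ.IsPure ∧ ∀ F ∈ Δ.faces, t ≤ F.card → IsCM K (Δ.link F)

/-- Buchsbaum-ness: pure and the reduced homology of the link of every nonempty
face vanishes below its dimension. -/
def IsBuchsbaum (K : Type*) [Field K] [LinearOrder V] (Δ : AbstractComplex V) : Prop :=
  Δ.IsPure ∧ ∀ G ∈ Δ.faces, G ≠ ∅ →
    ∀ i : ℤ, (Δ.link G).dimLT i → (Δ.link G).RHTriv K i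

end AbstractComplex

/-- The expansion `F^α` of a finite vertex set. -/
def expandSet {V : Type*} (α : V → ℕ) (F : Finset V) : Finset (Σ i, Fin (α i)) :=
  F.sigma fun _ => Finset.univ

namespace AbstractComplex

/-- The expansion `Δ^α` of a simplicial complex: the complex generated by the
expansions of the facets of `Δ`. -/
def expand {V : Type*} (Δ : AbstractComplex V) (α : V → ℕ) :
    AbstractComplex (Σ i, Fin (α i)) where
  faces := {σ | ∃ F, Δ.IsFacet F ∧ σ ⊆ expandSet α F}
  down_closed := fun ⟨F, hF, hsub⟩ hts => ⟨F, hF, hts.trans hsub⟩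

end AbstractComplex

/-- A linear order on the expanded vertex set (lexicographic). -/
noncomputable instance sigmaFinLinearOrder {V : Type*} [LinearOrder V] {α : V → ℕ} :
    LinearOrder (Σ i, Fin (α i)) :=
  LinearOrder.lift' (toLex : (Σ i, Fin (α i)) → Σₗ i, Fin (α i)) toLex.injective

namespace AbstractComplex

theorem ext' {V : Type*} {Δ₁ Δ₂ : AbstractComplex V} (h : Δ₁.faces = Δ₂.faces) :
    Δ₁ = Δ₂ := by
  cases Δ₁; cases Δ₂; simp_all

theorem link_link {V : Type*} [DecidableEq V] (Δ : AbstractComplex V) (F G : Finset V)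
    (hGF : G ∩ F = ∅) : (Δ.link F).link G = Δ.link (G ∪ F) := by
  apply ext'
  ext H
  show H ∩ G = ∅ ∧ (H ∪ G) ∩ F = ∅ ∧ (H ∪ G) ∪ F ∈ Δ.faces ↔
    H ∩ (G ∪ F) = ∅ ∧ H ∪ (G ∪ F) ∈ Δ.faces
  rw [Finset.union_inter_distrib_right, Finset.inter_union_distrib_left, hGF,
    Finset.union_assoc]
  simp [Finset.union_eq_empty]
  tauto

theorem exists_facet {V : Type*} [Fintype V] [DecidableEq V] (Δ : AbstractComplex V)
    {s : Finset V} (hs : s ∈ Δ.faces) : ∃ f, Δ.IsFacet f ∧ s ⊆ f := by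
  obtain ⟨u, ⟨hu, hsu⟩, hmax⟩ :=
    Set.Finite.exists_maximalFor Finset.card {w | w ∈ Δ.faces ∧ s ⊆ w}
      (Set.toFinite _) ⟨s, hs, subset_rfl⟩
  refine ⟨u, ⟨hu, fun w hw huw => ?_⟩, hsu⟩
  exact Finset.eq_of_subset_of_card_le huw
    (hmax (j := w) ⟨hw, hsu.trans huw⟩ (Finset.card_le_card huw))

theorem isFacet_union_of_link {V : Type*} [DecidableEq V] {Δ : AbstractComplex V}
    {F G : Finset V} (h : (Δ.link F).IsFacet G) : Δ.IsFacet (G ∪ F) := by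
  obtain ⟨⟨hGF, hGuF⟩, hmax⟩ := h
  refine ⟨hGuF, fun H hH hsub => ?_⟩
  have hF : F ⊆ H := (Finset.union_subset_iff.mp hsub).2
  have hHF : H \ F ∈ (Δ.link F).faces := by
    constructor
    · simp [Finset.sdiff_inter_self]
    · rwa [Finset.sdiff_union_of_subset hF]
  have hGsub : G ⊆ H \ F := by
    intro x hx
    rw [Finset.mem_sdiff]
    refine ⟨(Finset.union_subset_iff.mp hsub).1 hx, fun hxF => ?_⟩
    have : x ∈ G ∩ F := Finset.mem_inter.mpr ⟨hx, hxF⟩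
    simp [hGF] at this
  have := hmax (H \ F) hHF hGsub
  rw [this, Finset.sdiff_union_of_subset hF]

theorem isPure_link {V : Type*} [Fintype V] [DecidableEq V] {Δ : AbstractComplex V}
    (hpure : Δ.IsPure) (F : Finset V) : (Δ.link F).IsPure := by
  intro s u hs hu
  have hs' := isFacet_union_of_link hs
  have hu' := isFacet_union_of_link hu
  have hc := hpure _ _ hs' hu'
  have hds : Disjoint s F := Finset.disjoint_iff_inter_eq_empty.mpr hs.1.1
  have hdu : Disjoint u F := Finset.disjoint_iff_inter_eq_empty.mpr hu.1.1
  rw [Finset.card_union_of_disjoint hds, Finset.card_union_of_disjoint hdu] at hc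
  omega

end AbstractComplex

/-- for `t ≥ 1` and a nonempty complex `Δ`: `Δ` is `CM_t` iff `Δ` is
pure and the link of every vertex is `CM_{t-1}`. -/
theorem cmt_iff_link_cmt (K : Type*) [Field K] {V : Type*} [Fintype V] [LinearOrder V]
    (Δ : AbstractComplex V) (t : ℕ) (ht : 1 ≤ t) (hne : Δ.faces.Nonempty) :
    Δ.IsCMt K t ↔
      Δ.IsPure ∧ ∀ v : V, {v} ∈ Δ.faces → (Δ.link {v}).IsCMt K (t - 1) := by
  constructor
  · rintro ⟨hpure, hlinks⟩
    refine ⟨hpure, fun v hv => ⟨AbstractComplex.isPure_link hpure {v}, ?_⟩⟩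
    rintro G ⟨hGv, hGuv⟩ hcard
    have hdisj : Disjoint G ({v} : Finset V) := Finset.disjoint_iff_inter_eq_empty.mpr hGv
    have hcard' : t ≤ (G ∪ {v}).card := by
      rw [Finset.card_union_of_disjoint hdisj, Finset.card_singleton]
      omega
    have := hlinks (G ∪ {v}) hGuv hcard'
    rwa [AbstractComplex.link_link Δ {v} G hGv]
  · rintro ⟨hpure, hlinks⟩
    refine ⟨hpure, fun F hF hcard => ?_⟩
    have hFne : F.Nonempty := Finset.card_pos.mp (by omega)
    obtain ⟨v, hv⟩ := hFne
    have hvF : ({v} : Finset V) ∈ Δ.faces :=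
      Δ.down_closed hF (Finset.singleton_subset_iff.mpr hv)
    set G := F.erase v with hG
    have hGv : G ∩ {v} = ∅ := by simp [hG]
    have hGuv : G ∪ {v} = F := by
      rw [Finset.union_comm, ← Finset.insert_eq, Finset.insert_erase hv]
    have hGmem : G ∈ (Δ.link {v}).faces := by
      constructor
      · exact hGv
      · rwa [hGuv]
    have hGcard : t - 1 ≤ G.card := by
      have h2 : G.card = F.card - 1 := by rw [hG]; exact Finset.card_erase_of_mem hv
      omega
    have := (hlinks v hvF).2 G hGmem hGcard
    rwa [AbstractComplex.link_link Δ {v} G hGv, hGuv] at this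
end

section
/- Let I ⊂ K[x_1,…,x_n] be a monomial ideal and α ∈ ℕ^n with positive entries. Then the minimal monomial generating set of the expansion I^α equals the expansion of the minimal generating set: G(I^α) = G(I)^α. -/
open Finset

/-- `I` is a monomial ideal: generated by a set of monomials. -/
def IsMonomialIdeal {K : Type*} [Field K] {σ : Type*} (I : Ideal (MvPolynomial σ K)) : Prop :=
  ∃ M : Set (σ →₀ ℕ), I = Ideal.span ((fun m => MvPolynomial.monomial m (1 : K)) '' M)

/-- The minimal monomial generators `G(I)` of a monomial ideal, recorded by their
exponent vectors: monomials in `I` that are minimal with respect to divisibility. -/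
def minGens {K : Type*} [Field K] {σ : Type*} (I : Ideal (MvPolynomial σ K)) : Set (σ →₀ ℕ) :=
  {m | MvPolynomial.monomial m (1 : K) ∈ I ∧
    ∀ m', MvPolynomial.monomial m' (1 : K) ∈ I → m' ≤ m → m' = m}

/-- The prime ideal `P_j = (x_{j1}, …, x_{jk_j})` in the expanded polynomial ring. -/
noncomputable def varIdeal {K : Type*} [Field K] {V : Type*} (α : V → ℕ) (j : V) :
    Ideal (MvPolynomial (Σ i, Fin (α i)) K) :=
  Ideal.span (Set.range fun r : Fin (α j) => MvPolynomial.X ⟨j, r⟩)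

/-- The Bayati–Herzog expansion `I^α = Σ_{u ∈ G(I)} P_1^{ν_1(u)} ⋯ P_n^{ν_n(u)}`
of a monomial ideal. -/
noncomputable def expandIdeal {K : Type*} [Field K] {V : Type*} [Fintype V] (α : V → ℕ)
    (I : Ideal (MvPolynomial V K)) : Ideal (MvPolynomial (Σ i, Fin (α i)) K) :=
  ⨆ m ∈ minGens I, ∏ j : V, (varIdeal α j) ^ (m j)


namespace ExpandAux

variable {K : Type*} [Field K] {n : ℕ} {α : Fin n → ℕ}

/-- The block-degree map: total degree in each block of variables. -/
noncomputable def D (b : (Σ i : Fin n, Fin (α i)) →₀ ℕ) : Fin n →₀ ℕ :=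
  Finsupp.mapDomain Sigma.fst b

theorem D_add (a b : (Σ i : Fin n, Fin (α i)) →₀ ℕ) : D (a + b) = D a + D b :=
  Finsupp.mapDomain_add

theorem D_zero : D (0 : (Σ i : Fin n, Fin (α i)) →₀ ℕ) = 0 :=
  Finsupp.mapDomain_zero

theorem D_mono {a b : (Σ i : Fin n, Fin (α i)) →₀ ℕ} (h : a ≤ b) : D a ≤ D b := by
  obtain ⟨c, rfl⟩ := le_iff_exists_add.mp h
  rw [D_add]; exact le_add_of_nonneg_right zero_le

theorem eq_of_le_of_D_eq {a b : (Σ i : Fin n, Fin (α i)) →₀ ℕ} (h : a ≤ b)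
    (hD : D a = D b) : a = b := by
  obtain ⟨c, rfl⟩ := le_iff_exists_add.mp h
  rw [D_add, left_eq_add] at hD
  suffices hc : c = 0 by rw [hc, add_zero]
  have hsum : c.sum (fun _ v => v) = 0 := by
    have := Finsupp.sum_mapDomain_index (f := Sigma.fst) (s := c)
      (h := fun (_ : Fin n) (v : ℕ) => v) (fun _ => rfl) (fun _ _ _ => rfl)
    rw [← this]; rw [show Finsupp.mapDomain Sigma.fst c = D c from rfl, hD]
    simp
  ext x
  simp only [Finsupp.coe_zero, Pi.zero_apply]
  by_contra hx
  have hmem : x ∈ c.support := Finsupp.mem_support_iff.mpr hx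
  have : c x ≤ c.sum (fun _ v => v) :=
    Finset.single_le_sum (fun _ _ => Nat.zero_le _) hmem
  omega

theorem exists_le_D : ∀ (N : ℕ) (m : Fin n →₀ ℕ), m.sum (fun _ v => v) = N →
    ∀ b : (Σ i : Fin n, Fin (α i)) →₀ ℕ, m ≤ D b → ∃ s, s ≤ b ∧ D s = m := by
  intro N
  induction N with
  | zero =>
    intro m hm b _
    have : m = 0 := by
      ext j
      simp only [Finsupp.coe_zero, Pi.zero_apply]
      by_contra hj
      have : m j ≤ m.sum (fun _ v => v) :=
        Finset.single_le_sum (fun _ _ => Nat.zero_le _) (Finsupp.mem_support_iff.mpr hj)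
      omega
    exact ⟨0, zero_le, by rw [D_zero, this]⟩
  | succ N ih =>
    intro m hm b hmb
    have hmne : m ≠ 0 := by rintro rfl; simp at hm
    obtain ⟨j, hj⟩ : ∃ j, m j ≠ 0 := by
      by_contra h; push_neg at h; exact hmne (Finsupp.ext h)
    have hsingle : Finsupp.single j 1 ≤ m := Finsupp.single_le_iff.mpr (by omega)
    obtain ⟨m', rfl⟩ := le_iff_exists_add.mp hsingle
    have hDj : (D b) j ≠ 0 := by
      have := hmb j
      simp only [Finsupp.coe_add, Pi.add_apply, Finsupp.single_eq_same] at this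
      omega
    have hjsup : j ∈ (D b).support := Finsupp.mem_support_iff.mpr hDj
    have := Finsupp.mapDomain_support (f := Sigma.fst) (s := b)
    obtain ⟨a, ha, haj⟩ := Finset.mem_image.mp (this hjsup)
    have hab : Finsupp.single a 1 ≤ b :=
      Finsupp.single_le_iff.mpr (by
        have := Finsupp.mem_support_iff.mp ha; omega)
    obtain ⟨b', rfl⟩ := le_iff_exists_add.mp hab
    have hDb : D (Finsupp.single a 1 + b') = Finsupp.single j 1 + D b' := by
      rw [D_add]
      congr 1
      rw [show D (Finsupp.single a 1) = Finsupp.mapDomain Sigma.fst (Finsupp.single a 1) from rfl,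
        Finsupp.mapDomain_single, haj]
    have hm'le : m' ≤ D b' := by
      rw [hDb] at hmb
      exact (add_le_add_iff_left _).mp hmb
    have hm'sum : m'.sum (fun _ v => v) = N := by
      rw [Finsupp.sum_add_index' (fun _ => rfl) (fun _ _ _ => rfl)] at hm
      rw [Finsupp.sum_single_index rfl] at hm
      omega
    obtain ⟨s', hs'le, hs'D⟩ := ih m' hm'sum b' hm'le
    refine ⟨Finsupp.single a 1 + s', add_le_add_right hs'le _, ?_⟩
    rw [D_add, hs'D]
    congr 1
    rw [show D (Finsupp.single a 1) = Finsupp.mapDomain Sigma.fst (Finsupp.single a 1) from rfl,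
      Finsupp.mapDomain_single, haj]

end ExpandAux

namespace ExpandAux

open MvPolynomial

variable {K : Type*} [Field K] {n : ℕ} {α : Fin n → ℕ}

/-- Any monomial lies in the product of variable-ideal powers given by its block degrees. -/
theorem monomial_mem_prod_pow_D : ∀ (N : ℕ) (s : (Σ i : Fin n, Fin (α i)) →₀ ℕ),
    s.sum (fun _ v => v) = N →
    monomial s (1 : K) ∈ ∏ j : Fin n, (varIdeal α j) ^ (D s j) := by
  intro N
  induction N with
  | zero =>
    intro s hs
    have : s = 0 := by
      ext x
      simp only [Finsupp.coe_zero, Pi.zero_apply]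
      by_contra hx
      have : s x ≤ s.sum (fun _ v => v) :=
        Finset.single_le_sum (fun _ _ => Nat.zero_le _) (Finsupp.mem_support_iff.mpr hx)
      omega
    subst this
    simp only [D_zero, Finsupp.coe_zero, Pi.zero_apply, pow_zero, Finset.prod_const_one]
    rw [Ideal.one_eq_top]
    exact Submodule.mem_top
  | succ N ih =>
    intro s hs
    have hne : s ≠ 0 := by rintro rfl; simp at hs
    obtain ⟨a, ha⟩ : ∃ a, s a ≠ 0 := by
      by_contra h; push_neg at h; exact hne (Finsupp.ext h)
    have hle : Finsupp.single a 1 ≤ s := Finsupp.single_le_iff.mpr (by omega)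
    obtain ⟨s', rfl⟩ := le_iff_exists_add.mp hle
    have hs' : s'.sum (fun _ v => v) = N := by
      rw [Finsupp.sum_add_index' (fun _ => rfl) (fun _ _ _ => rfl),
        Finsupp.sum_single_index rfl] at hs
      omega
    have hDsingle : D (Finsupp.single a (1 : ℕ)) = Finsupp.single a.1 1 :=
      Finsupp.mapDomain_single
    have hprod : ∏ j : Fin n, (varIdeal α (K := K) j) ^ (D (Finsupp.single a 1 + s') j)
        = (varIdeal α a.1) * ∏ j : Fin n, (varIdeal α j) ^ (D s' j) := by
      rw [D_add, hDsingle]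
      simp only [Finsupp.add_apply, pow_add]
      rw [Finset.prod_mul_distrib]
      congr 1
      rw [Finset.prod_eq_single a.1 (fun j _ hj => by
        rw [Finsupp.single_eq_of_ne' (Ne.symm hj), pow_zero]) (fun h => absurd (Finset.mem_univ _) h)]
      rw [Finsupp.single_eq_same, pow_one]
    rw [hprod]
    have hX : (X a : MvPolynomial (Σ i : Fin n, Fin (α i)) K) ∈ varIdeal α a.1 :=
      Ideal.subset_span ⟨a.2, rfl⟩
    have := Ideal.mul_mem_mul hX (ih s' hs')
    have heq : (X a : MvPolynomial (Σ i : Fin n, Fin (α i)) K) * monomial s' 1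
        = monomial (Finsupp.single a 1 + s') 1 := by
      rw [X, monomial_mul, one_mul]
    rwa [heq] at this

theorem monomial_mem_prod_pow_of_le {k : Fin n →₀ ℕ} {b : (Σ i : Fin n, Fin (α i)) →₀ ℕ}
    (h : k ≤ D b) :
    monomial b (1 : K) ∈ ∏ j : Fin n, (varIdeal α j) ^ (k j) := by
  obtain ⟨s, hsb, hsD⟩ := exists_le_D (k.sum fun _ v => v) k rfl b h
  obtain ⟨c, rfl⟩ := le_iff_exists_add.mp hsb
  have heq : (monomial (s + c) (1 : K)) = monomial c 1 * monomial s 1 := by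
    rw [monomial_mul, one_mul, add_comm]
  rw [heq, ← hsD]
  exact Ideal.mul_mem_left _ _ (monomial_mem_prod_pow_D (s.sum fun _ v => v) s rfl)

/-- The projection homomorphism sending `x_{j,r}` to `x_j`. -/
noncomputable def proj : MvPolynomial (Σ i : Fin n, Fin (α i)) K →+* MvPolynomial (Fin n) K :=
  (rename Sigma.fst).toRingHom

theorem proj_monomial (b : (Σ i : Fin n, Fin (α i)) →₀ ℕ) :
    proj (K := K) (monomial b 1) = monomial (D b) 1 :=
  rename_monomial _ _ _

theorem map_varIdeal_le (j : Fin n) :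
    Ideal.map (proj (K := K) (α := α)) (varIdeal α j) ≤ Ideal.span {X j} := by
  rw [varIdeal, Ideal.map_span, Ideal.span_le]
  rintro _ ⟨_, ⟨r, rfl⟩, rfl⟩
  have : proj (K := K) (α := α) (X ⟨j, r⟩) = X j := rename_X _ _
  rw [this]
  exact Ideal.subset_span rfl

theorem map_pow_le {R S : Type*} [CommRing R] [CommRing S] (f : R →+* S)
    {A : Ideal R} {B : Ideal S} (h : Ideal.map f A ≤ B) (k : ℕ) :
    Ideal.map f (A ^ k) ≤ B ^ k := by
  induction k with
  | zero => simp [Ideal.one_eq_top]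
  | succ k ih =>
    rw [pow_succ, pow_succ, Ideal.map_mul]
    exact Ideal.mul_mono ih h

theorem map_prod_pow_le {R S : Type*} [CommRing R] [CommRing S] (f : R →+* S)
    {ι : Type*} (t : Finset ι) (A : ι → Ideal R) (B : ι → Ideal S) (k : ι → ℕ)
    (h : ∀ j, Ideal.map f (A j) ≤ B j) :
    Ideal.map f (∏ j ∈ t, (A j) ^ (k j)) ≤ ∏ j ∈ t, (B j) ^ (k j) := by
  classical
  induction t using Finset.induction_on with
  | empty => simp [Ideal.one_eq_top]
  | @insert a t' hx ih =>
    rw [Finset.prod_insert hx, Finset.prod_insert hx, Ideal.map_mul]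
    exact Ideal.mul_mono (map_pow_le f (h a) _) ih

theorem prod_span_X_pow (k : Fin n →₀ ℕ) :
    ∏ j : Fin n, (Ideal.span {(X j : MvPolynomial (Fin n) K)}) ^ (k j)
      = Ideal.span {monomial k 1} := by
  have : ∀ j : Fin n, (Ideal.span {(X j : MvPolynomial (Fin n) K)}) ^ (k j)
      = Ideal.span {X j ^ (k j)} := fun j => Ideal.span_singleton_pow _ _
  rw [Finset.prod_congr rfl (fun j _ => this j), Ideal.prod_span_singleton]
  congr 1
  rw [← prod_X_pow_eq_monomial]
  rw [Finset.prod_subset (Finset.subset_univ k.support)]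
  intro x _ hx
  rw [Finsupp.notMem_support_iff.mp hx, pow_zero]

theorem map_prod_varIdeal_le (k : Fin n →₀ ℕ) :
    Ideal.map (proj (K := K) (α := α)) (∏ j : Fin n, (varIdeal α j) ^ (k j))
      ≤ Ideal.span {monomial k 1} := by
  rw [← prod_span_X_pow]
  exact map_prod_pow_le _ _ _ _ _ map_varIdeal_le

/-- Characterization of monomial membership in the expansion-type supremum. -/
theorem monomial_mem_iSup_iff (S : Set (Fin n →₀ ℕ)) (b : (Σ i : Fin n, Fin (α i)) →₀ ℕ) :
    monomial b (1 : K) ∈ (⨆ m ∈ S, ∏ j : Fin n, (varIdeal α j) ^ (m j)) ↔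
      ∃ m ∈ S, m ≤ D b := by
  classical
  constructor
  · intro hmem
    have hle : (⨆ m ∈ S, ∏ j : Fin n, (varIdeal α (K := K) j) ^ (m j)) ≤
        Ideal.comap (proj (K := K) (α := α))
          (Ideal.span ((fun m => monomial m (1 : K)) '' S)) := by
      refine iSup₂_le fun m hm => ?_
      rw [← Ideal.map_le_iff_le_comap]
      refine le_trans (map_prod_varIdeal_le m) (Ideal.span_mono ?_)
      exact Set.singleton_subset_iff.mpr ⟨m, hm, rfl⟩
    have := hle hmem
    rw [Ideal.mem_comap, proj_monomial] at this
    rw [mem_ideal_span_monomial_image] at this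
    refine this (D b) ?_
    rw [support_monomial, if_neg one_ne_zero]
    exact Finset.mem_singleton_self _
  · rintro ⟨m, hm, hle⟩
    refine (le_iSup₂ (f := fun (m : Fin n →₀ ℕ) (_ : m ∈ S) =>
      ∏ j : Fin n, (varIdeal α (K := K) j) ^ (m j)) m hm) ?_
    exact monomial_mem_prod_pow_of_le hle

theorem monomial_mem_span_singleton_iff (m u : Fin n →₀ ℕ) :
    monomial u (1 : K) ∈ Ideal.span {monomial m (1 : K)} ↔ m ≤ u := by
  classical
  rw [show ({monomial m (1 : K)} : Set (MvPolynomial (Fin n) K))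
      = (fun s => monomial s (1 : K)) '' {m} by rw [Set.image_singleton],
    mem_ideal_span_monomial_image]
  rw [support_monomial, if_neg (one_ne_zero)]
  constructor
  · intro h
    obtain ⟨si, hsi, hle⟩ := h u (Finset.mem_singleton_self u)
    rwa [Set.mem_singleton_iff.mp hsi] at hle
  · intro h xi hxi
    rw [Finset.mem_singleton] at hxi
    exact ⟨m, rfl, hxi ▸ h⟩

theorem minGens_span_singleton (m : Fin n →₀ ℕ) :
    minGens (Ideal.span {monomial m (1 : K)}) = {m} := by
  ext u
  simp only [minGens, Set.mem_setOf_eq, Set.mem_singleton_iff,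
    monomial_mem_span_singleton_iff]
  constructor
  · rintro ⟨h1, h2⟩
    exact (h2 m le_rfl h1).symm
  · rintro rfl
    exact ⟨le_rfl, fun m' h1 h2 => le_antisymm h2 h1⟩

theorem monomial_mem_expandIdeal_iff (I : Ideal (MvPolynomial (Fin n) K))
    (b : (Σ i : Fin n, Fin (α i)) →₀ ℕ) :
    monomial b (1 : K) ∈ expandIdeal α I ↔ ∃ m ∈ minGens I, m ≤ D b :=
  monomial_mem_iSup_iff _ _

theorem minGens_expandIdeal_singleton (m : Fin n →₀ ℕ) :
    minGens (expandIdeal α (Ideal.span {monomial m (1 : K)}))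
      = {b | D b = m} := by
  have hmem : ∀ b : (Σ i : Fin n, Fin (α i)) →₀ ℕ,
      monomial b (1 : K) ∈ expandIdeal α (Ideal.span {monomial m (1 : K)}) ↔ m ≤ D b := by
    intro b
    rw [monomial_mem_expandIdeal_iff, minGens_span_singleton]
    simp
  ext b
  simp only [minGens, Set.mem_setOf_eq, hmem]
  constructor
  · rintro ⟨h1, h2⟩
    obtain ⟨s, hsb, hsD⟩ := exists_le_D (m.sum fun _ v => v) m rfl b h1
    have := h2 s (le_of_eq hsD.symm) hsb
    rw [← this, hsD]
  · intro hb
    refine ⟨le_of_eq hb.symm, fun b' h1 h2 => ?_⟩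
    exact eq_of_le_of_D_eq h2 (le_antisymm (D_mono h2) (hb ▸ h1))

end ExpandAux

/-- `G(I^α) = G(I)^α` for a monomial ideal `I`. -/
theorem minGens_expandIdeal {K : Type*} [Field K] {n : ℕ} (α : Fin n → ℕ)
    (hα : ∀ i, 1 ≤ α i) (I : Ideal (MvPolynomial (Fin n) K)) (hI : IsMonomialIdeal I) :
    minGens (expandIdeal α I) =
      ⋃ m ∈ minGens I,
        minGens (expandIdeal α (Ideal.span {MvPolynomial.monomial m (1 : K)})) := by
  classical
  ext b
  simp only [Set.mem_iUnion, ExpandAux.minGens_expandIdeal_singleton, Set.mem_setOf_eq]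
  constructor
  · rintro ⟨h1, h2⟩
    obtain ⟨m, hmG, hmle⟩ := (ExpandAux.monomial_mem_expandIdeal_iff I b).mp h1
    obtain ⟨s, hsb, hsD⟩ := ExpandAux.exists_le_D _ m rfl b hmle
    have hs : MvPolynomial.monomial s (1 : K) ∈ expandIdeal α I :=
      (ExpandAux.monomial_mem_expandIdeal_iff I s).mpr ⟨m, hmG, le_of_eq hsD.symm⟩
    have hsb' := h2 s hs hsb
    exact ⟨m, hmG, by rw [← hsb', hsD]⟩
  · rintro ⟨m, hmG, hDb⟩
    refine ⟨(ExpandAux.monomial_mem_expandIdeal_iff I b).mpr ⟨m, hmG, le_of_eq hDb.symm⟩, ?_⟩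
    intro b' h1 h2
    obtain ⟨m', hm'G, hm'le⟩ := (ExpandAux.monomial_mem_expandIdeal_iff I b').mp h1
    obtain ⟨hm'1, _⟩ := hm'G
    obtain ⟨_, hm2⟩ := hmG
    have hm'm : m' = m := hm2 m' hm'1
      (le_trans hm'le (le_trans (ExpandAux.D_mono h2) (le_of_eq hDb)))
    refine ExpandAux.eq_of_le_of_D_eq h2 (le_antisymm (ExpandAux.D_mono h2) ?_)
    rw [hDb, ← hm'm]
    exact hm'le
end

section
/- Let 𝒢 be a simple graph and Γ the contraction of its independence complex Δ_𝒢. Then Γ is itself the independence complex of a simple graph; equivalently, every minimal non-face of Γ has cardinality 2. -/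
open Finset

namespace AbstractComplex

variable {V : Type*}

/-- Two vertices are equivalent iff they lie in exactly the same facets. -/
def contractSetoid (Δ : AbstractComplex V) : Setoid V where
  r x y := ∀ F : Finset V, Δ.IsFacet F → (x ∈ F ↔ y ∈ F)
  iseqv := ⟨fun _ _ _ => Iff.rfl, fun h F hF => (h F hF).symm,
    fun h1 h2 F hF => (h1 F hF).trans (h2 F hF)⟩

/-- The contraction of `Δ`: the complex on the equivalence classes of vertices,
whose facets are the images of the facets of `Δ`. -/
def contraction (Δ : AbstractComplex V) : AbstractComplex (Quotient Δ.contractSetoid) where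
  faces := {σ | ∃ F : Finset V, Δ.IsFacet F ∧
    ∀ y ∈ σ, ∃ x ∈ F, Quotient.mk Δ.contractSetoid x = y}
  down_closed := fun ⟨F, hF, h⟩ hts => ⟨F, hF, fun y hy => h y (hts hy)⟩

/-- The size of an equivalence class of vertices: the components of the vector
obtained from contraction. -/
noncomputable def classSize (Δ : AbstractComplex V) (y : Quotient Δ.contractSetoid) : ℕ :=
  Nat.card {x : V // Quotient.mk Δ.contractSetoid x = y}

end AbstractComplex

noncomputable instance quotLinearOrder {V : Type*} [LinearOrder V] {s : Setoid V} :
    LinearOrder (Quotient s) :=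
  LinearOrder.lift' Quotient.out Quotient.out_injective

/-- The independence complex of a simple graph. -/
def indepComplex {V : Type*} (G : SimpleGraph V) : AbstractComplex V where
  faces := {s | ∀ x ∈ s, ∀ y ∈ s, ¬ G.Adj x y}
  down_closed := fun h hts x hx y hy => h x (hts hx) y (hts hy)


theorem AbstractComplex.exists_facet_superset {V : Type*} [Fintype V]
    (Δ : AbstractComplex V) {s : Finset V}
    (hs : s ∈ Δ.faces) : ∃ F, Δ.IsFacet F ∧ s ⊆ F := by
  classical
  set T : Finset (Finset V) := univ.powerset.filter (fun t => t ∈ Δ.faces ∧ s ⊆ t) with hT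
  have hsT : s ∈ T := by simp [hT, hs]
  obtain ⟨F, hFT, hmax⟩ := T.exists_max_image (fun t => t.card) ⟨s, hsT⟩
  simp only [hT, mem_filter] at hFT
  refine ⟨F, ⟨hFT.2.1, fun t ht hFt => ?_⟩, hFT.2.2⟩
  have htT : t ∈ T := by simp [hT, ht, hFT.2.2.trans hFt]
  exact (eq_of_subset_of_card_le hFt (hmax t htT))

/-- the contraction of the independence complex of a simple graph is
itself the independence complex of a simple graph. -/
theorem contraction_indepComplex {V : Type*} [Fintype V] (G : SimpleGraph V) :
    ∃ H : SimpleGraph (Quotient (indepComplex G).contractSetoid),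
      ((indepComplex G).contraction).faces = (indepComplex H).faces := by
  classical
  refine ⟨⟨fun a b => a ≠ b ∧ G.Adj a.out b.out, ⟨fun a b h => ⟨h.1.symm, h.2.symm⟩⟩,
    ⟨fun a h => h.1 rfl⟩⟩, ?_⟩
  ext σ
  simp only [AbstractComplex.contraction, indepComplex, Set.mem_setOf_eq]
  constructor
  · rintro ⟨F, hF, h⟩ a ha b hb ⟨hab, hadj⟩
    obtain ⟨xa, hxaF, hxa⟩ := h a ha
    obtain ⟨xb, hxbF, hxb⟩ := h b hb
    have hao : a.out ∈ F := by
      have hr : (indepComplex G).contractSetoid.r xa a.out :=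
        Quotient.exact (hxa.trans (Quotient.out_eq a).symm)
      exact (hr F hF).mp hxaF
    have hbo : b.out ∈ F := by
      have hr : (indepComplex G).contractSetoid.r xb b.out :=
        Quotient.exact (hxb.trans (Quotient.out_eq b).symm)
      exact (hr F hF).mp hxbF
    exact hF.1 _ hao _ hbo hadj
  · intro h
    have hs : σ.image Quotient.out ∈ (indepComplex G).faces := by
      intro x hx y hy hadj
      obtain ⟨a, ha, rfl⟩ := mem_image.mp hx
      obtain ⟨b, hb, rfl⟩ := mem_image.mp hy
      by_cases hab : a = b
      · exact G.irrefl (hab ▸ hadj)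
      · exact h a ha b hb ⟨hab, hadj⟩
    obtain ⟨F, hF, hsub⟩ := (indepComplex G).exists_facet_superset hs
    exact ⟨F, hF, fun y hy => ⟨y.out, hsub (mem_image_of_mem _ hy), Quotient.out_eq y⟩⟩
end
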